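/- If φ: G → B is a fibration (a graph homomorphism whose restriction to in-neighborhoods is a bijection, i.e., for each node u of G and each edge e of B with target φ(u), there is exactly one edge of G with target u mapping to e), then for every node u of G, the input tree of u in G is isomorphic to the input tree of φ(u) in B. -/

import Mathlib

/-- A finite directed multigraph: a node type, an edge type, and source/target maps. -/
structure FinDigraph where
  V : Type
  E : Type
  [finV : Finite V]
  [finE : Finite E]
  src : E → V
  tgt : E → V

attribute [instance] FinDigraph.finV FinDigraph.finE

namespace FinDigraph

/-- The far endpoint of a (reversed) path ending at `u`: the list `[e_k, …, e_1]`
represents the directed path `src e_k → ⋯ → tgt e_1 = u`. -/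
def farEnd (G : FinDigraph) (u : G.V) : List G.E → G.V
  | [] => u
  | e :: _ => G.src e

/-- `l = [e_k, …, e_1]` is a directed path of `G` ending at `u`. -/
def IsInPath (G : FinDigraph) (u : G.V) : List G.E → Prop
  | [] => True
  | e :: es => IsInPath G u es ∧ G.tgt e = G.farEnd u es

/-- The nodes of the input tree of `u`: all directed paths ending at `u`. -/
def InPath (G : FinDigraph) (u : G.V) : Type := {l : List G.E // G.IsInPath u l}

/-- The root of the input tree of `u` (the empty path). -/
def root (G : FinDigraph) (u : G.V) : G.InPath u := ⟨[], trivial⟩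

/-- The parent of a path in the input tree (drop the farthest edge); the root is its own parent. -/
def parent (G : FinDigraph) (u : G.V) : G.InPath u → G.InPath u
  | ⟨[], h⟩ => ⟨[], h⟩
  | ⟨_ :: es, h⟩ => ⟨es, h.1⟩

/-- Isomorphism of input trees: a bijection of paths preserving root, depth and parent. -/
def InTreeIso (G : FinDigraph) (u : G.V) (H : FinDigraph) (v : H.V) : Prop :=
  ∃ F : G.InPath u ≃ H.InPath v,
    F (G.root u) = H.root v ∧
    (∀ p, ((F p).1).length = (p.1).length) ∧
    (∀ p, F (G.parent u p) = H.parent v (F p))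

/-- The reverse graph (all edges flipped). -/
def rev (G : FinDigraph) : FinDigraph :=
  { V := G.V, E := G.E, src := G.tgt, tgt := G.src }

/-- Isomorphism of output trees = isomorphism of input trees in the reverse graphs. -/
def OutTreeIso (G : FinDigraph) (u : G.V) (H : FinDigraph) (v : H.V) : Prop :=
  InTreeIso (rev G) u (rev H) v

/-- A homomorphism of directed multigraphs. -/
structure Hom (G H : FinDigraph) where
  onV : G.V → H.V
  onE : G.E → H.E
  map_src : ∀ e, H.src (onE e) = onV (G.src e)
  map_tgt : ∀ e, H.tgt (onE e) = onV (G.tgt e)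

/-- Isomorphism of directed multigraphs. -/
def IsIso (G H : FinDigraph) : Prop :=
  ∃ φ : Hom G H, Function.Bijective φ.onV ∧ Function.Bijective φ.onE

/-- Fibration equivalence of nodes: isomorphic input trees. -/
def fibEquiv (G : FinDigraph) (u v : G.V) : Prop := InTreeIso G u G v

/-- Covering equivalence of nodes: isomorphic input trees and isomorphic output trees. -/
def covEquiv (G : FinDigraph) (u v : G.V) : Prop :=
  InTreeIso G u G v ∧ OutTreeIso G u G v

/-- Orbit equivalence: some automorphism maps one node to the other. -/
def orbitEquiv (G : FinDigraph) (u v : G.V) : Prop :=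
  ∃ φ : Hom G G, Function.Bijective φ.onV ∧ Function.Bijective φ.onE ∧ φ.onV u = v

theorem inTreeIso_refl (G : FinDigraph) (u : G.V) : InTreeIso G u G u :=
  ⟨Equiv.refl _, rfl, fun _ => rfl, fun _ => rfl⟩

theorem inTreeIso_symm {G : FinDigraph} {u : G.V} {H : FinDigraph} {v : H.V}
    (h : InTreeIso G u H v) : InTreeIso H v G u := by
  obtain ⟨F, hroot, hlen, hpar⟩ := h
  refine ⟨F.symm, ?_, ?_, ?_⟩
  · rw [← hroot, Equiv.symm_apply_apply]
  · intro p; rw [← hlen (F.symm p), Equiv.apply_symm_apply]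
  · intro p
    apply F.injective
    rw [Equiv.apply_symm_apply, hpar (F.symm p), Equiv.apply_symm_apply]

theorem inTreeIso_trans {G : FinDigraph} {u : G.V} {H : FinDigraph} {v : H.V}
    {K : FinDigraph} {w : K.V}
    (h₁ : InTreeIso G u H v) (h₂ : InTreeIso H v K w) : InTreeIso G u K w := by
  obtain ⟨F, fr, fl, fp⟩ := h₁
  obtain ⟨F', gr, gl, gp⟩ := h₂
  refine ⟨F.trans F', ?_, ?_, ?_⟩
  · simp [Equiv.trans_apply, fr, gr]
  · intro p; simp [Equiv.trans_apply, gl, fl]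
  · intro p; simp [Equiv.trans_apply, fp, gp]

/-- The setoid of fibration equivalence (isomorphism of input trees). -/
def fibSetoid (G : FinDigraph) : Setoid G.V :=
  ⟨fibEquiv G, ⟨fun u => inTreeIso_refl G u, inTreeIso_symm, inTreeIso_trans⟩⟩

/-- The minimal fibration base of `G`: nodes are the fibers (input-tree isomorphism
classes), and the edges from a fiber `C'` into a fiber `C` are the edges of `G` from
nodes of `C'` into the chosen representative of `C`. -/
def base (G : FinDigraph) : FinDigraph where
  V := Quotient (fibSetoid G)
  E := {e : G.E // G.tgt e = (Quotient.mk (fibSetoid G) (G.tgt e)).out}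
  src e := Quotient.mk (fibSetoid G) (G.src e.1)
  tgt e := Quotient.mk (fibSetoid G) (G.tgt e.1)

/-- The fiber of a node, as a node of the minimal base. -/
def fibClass (G : FinDigraph) (u : G.V) : (base G).V := Quotient.mk (fibSetoid G) u

/-- A partition (given as an equivalence relation) is balanced if any two equivalent
nodes receive the same number of edges from each class. -/
def IsBalanced (G : FinDigraph) (r : G.V → G.V → Prop) : Prop :=
  Equivalence r ∧ ∀ u v, r u v → ∀ w : G.V,
    Nat.card {e : G.E // G.tgt e = u ∧ r (G.src e) w} =
    Nat.card {e : G.E // G.tgt e = v ∧ r (G.src e) w}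

/-- The multiset of states of the in-neighbors of `u` (with edge multiplicity). -/
noncomputable def inStates (G : FinDigraph) {S : Type} (x : G.V → S) (u : G.V) :
    Multiset S :=
  letI := Fintype.ofFinite G.E
  letI := Classical.decEq G.V
  (Finset.univ.filter (fun e => G.tgt e = u)).val.map fun e => x (G.src e)

end FinDigraph

/-- A fibration `φ : G → B`: a homomorphism such that for each node `u` of `G` and each
edge `e` of `B` ending at `φ u`, there is a unique edge of `G` ending at `u` over `e`. -/
def FinDigraph.IsFibration (G B : FinDigraph) (φ : FinDigraph.Hom G B) : Prop :=
  ∀ (u : G.V) (e : B.E), B.tgt e = φ.onV u →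
    ∃! e2 : G.E, G.tgt e2 = u ∧ φ.onE e2 = e


namespace FinDigraph

lemma farEnd_map (G B : FinDigraph) (φ : Hom G B) (u : G.V) (l : List G.E) :
    B.farEnd (φ.onV u) (l.map φ.onE) = φ.onV (G.farEnd u l) := by
  cases l with
  | nil => rfl
  | cons e es => simp [farEnd, φ.map_src]

lemma isInPath_map (G B : FinDigraph) (φ : Hom G B) (u : G.V) (l : List G.E)
    (h : G.IsInPath u l) : B.IsInPath (φ.onV u) (l.map φ.onE) := by
  induction l with
  | nil => trivial
  | cons e es ih =>
    exact ⟨ih h.1, by rw [φ.map_tgt, h.2, farEnd_map]⟩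

lemma map_inj (G B : FinDigraph) (φ : Hom G B) (hfib : IsFibration G B φ) (u : G.V) :
    ∀ l1 l2 : List G.E, G.IsInPath u l1 → G.IsInPath u l2 →
      l1.map φ.onE = l2.map φ.onE → l1 = l2 := by
  intro l1
  induction l1 with
  | nil => intro l2 _ _ h; cases l2 <;> simp_all
  | cons e es ih =>
    intro l2 h1 h2 hmap
    cases l2 with
    | nil => simp at hmap
    | cons f fs =>
      simp only [List.map_cons, List.cons.injEq] at hmap
      have htails : es = fs := ih fs h1.1 h2.1 hmap.2
      subst htails
      obtain ⟨_, _, huniq⟩ := hfib (G.farEnd u es) (φ.onE e)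
        (by rw [φ.map_tgt, h1.2])
      have he : e = _ := huniq e ⟨h1.2, rfl⟩
      have hf : f = _ := huniq f ⟨h2.2, hmap.1.symm⟩
      rw [List.cons.injEq]
      exact ⟨he.trans hf.symm, rfl⟩

lemma map_surj (G B : FinDigraph) (φ : Hom G B) (hfib : IsFibration G B φ) (u : G.V) :
    ∀ m : List B.E, B.IsInPath (φ.onV u) m →
      ∃ l : List G.E, G.IsInPath u l ∧ l.map φ.onE = m := by
  intro m
  induction m with
  | nil => exact fun _ => ⟨[], trivial, rfl⟩
  | cons f fs ih =>
    intro h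
    obtain ⟨l, hl, hml⟩ := ih h.1
    obtain ⟨e, ⟨he1, he2⟩, _⟩ := hfib (G.farEnd u l) f
      (by rw [h.2, ← hml, farEnd_map])
    exact ⟨e :: l, ⟨hl, he1⟩, by simp [he2, hml]⟩

end FinDigraph

/-- along a fibration `φ : G → B`, the input tree of every node `u` of `G`
is isomorphic to the input tree of `φ(u)` in `B`. -/
theorem fibration_inTreeIso (G B : FinDigraph) (φ : FinDigraph.Hom G B)
    (hfib : FinDigraph.IsFibration G B φ) (u : G.V) :
    FinDigraph.InTreeIso G u B (φ.onV u) := by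
  classical
  have hbij : Function.Bijective (fun p : G.InPath u =>
      (⟨p.1.map φ.onE, FinDigraph.isInPath_map G B φ u p.1 p.2⟩ : B.InPath (φ.onV u))) := by
    constructor
    · rintro ⟨l1, h1⟩ ⟨l2, h2⟩ h
      exact Subtype.ext (FinDigraph.map_inj G B φ hfib u l1 l2 h1 h2 (congrArg Subtype.val h))
    · rintro ⟨m, hm⟩
      obtain ⟨l, hl, hml⟩ := FinDigraph.map_surj G B φ hfib u m hm
      exact ⟨⟨l, hl⟩, Subtype.ext hml⟩
  refine ⟨Equiv.ofBijective _ hbij, rfl, fun p => by show (p.1.map φ.onE).length = p.1.length; simp, ?_⟩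
  rintro ⟨l, h⟩
  cases l with
  | nil => rfl
  | cons e es => rfl
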